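/- For every p ∈ ℝ³ with p ≠ (0, 0, 0), there exist integers k₁, k₂, k₃, not all zero, with k₁ + k₂ + k₃ = 0, such that the circle action (t, z) ↦ (e^{ik₁t}z₁, e^{ik₂t}z₂, e^{ik₃t}z₃) maps the fiber f⁻¹({p}) of the Harvey–Lawson map into itself and acts freely on it: for every z ∈ f⁻¹({p}) and t ∈ ℝ, if (e^{ik₁t}z₁, e^{ik₂t}z₂, e^{ik₃t}z₃) = (z₁, z₂, z₃) then t ∈ 2πℤ. (This realizes, for the Harvey–Lawson fibration, the statement that every fiber away from the vertex admits a fixed-point-free U(1) action.) -/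

import Mathlib

open Complex

/-- The Harvey–Lawson map `f : ℂ³ → ℝ³`. -/
noncomputable def HarveyLawson (z : Fin 3 → ℂ) : Fin 3 → ℝ :=
  ![(z 0 * z 1 * z 2).im,
    ‖z 0‖ ^ 2 - ‖z 1‖ ^ 2,
    ‖z 0‖ ^ 2 - ‖z 2‖ ^ 2]

lemma hl_abs_exp (k : ℤ) (t : ℝ) :
    ‖Complex.exp ((k : ℂ) * (t : ℂ) * Complex.I)‖ = 1 := by
  rw [Complex.norm_exp]; simp

lemma hl_invariant (k : Fin 3 → ℤ) (hk : k 0 + k 1 + k 2 = 0) (z : Fin 3 → ℂ) (t : ℝ) :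
    HarveyLawson (fun j => Complex.exp ((k j : ℂ) * (t : ℂ) * Complex.I) * z j)
      = HarveyLawson z := by
  have hsum : ((k 0 : ℂ) * t * I) + ((k 1 : ℂ) * t * I) + ((k 2 : ℂ) * t * I) = 0 := by
    have h : ((k 0 : ℂ) + k 1 + k 2) = 0 := by exact_mod_cast congrArg (Int.cast : ℤ → ℂ) hk
    linear_combination (t : ℂ) * I * h
  have hprod :
      (Complex.exp ((k 0 : ℂ) * t * I) * z 0) * (Complex.exp ((k 1 : ℂ) * t * I) * z 1)
        * (Complex.exp ((k 2 : ℂ) * t * I) * z 2) = z 0 * z 1 * z 2 := by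
    calc (Complex.exp ((k 0 : ℂ) * t * I) * z 0) * (Complex.exp ((k 1 : ℂ) * t * I) * z 1)
        * (Complex.exp ((k 2 : ℂ) * t * I) * z 2)
        = Complex.exp ((k 0 : ℂ) * t * I) * Complex.exp ((k 1 : ℂ) * t * I)
            * Complex.exp ((k 2 : ℂ) * t * I) * (z 0 * z 1 * z 2) := by ring
      _ = Complex.exp (((k 0 : ℂ) * t * I) + ((k 1 : ℂ) * t * I) + ((k 2 : ℂ) * t * I))
            * (z 0 * z 1 * z 2) := by rw [← Complex.exp_add, ← Complex.exp_add]
      _ = z 0 * z 1 * z 2 := by rw [hsum, Complex.exp_zero, one_mul]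
  funext i
  fin_cases i <;>
    simp [HarveyLawson, hprod, map_mul, hl_abs_exp]

lemma hl_free_aux (t : ℝ) (z : ℂ) (hz : z ≠ 0) (s : ℤ) (hs : s = 1 ∨ s = -1)
    (h : Complex.exp ((s : ℂ) * (t : ℝ) * Complex.I) * z = z) :
    ∃ m : ℤ, t = 2 * Real.pi * m := by
  have h1 : Complex.exp ((s : ℂ) * (t : ℝ) * Complex.I) = 1 :=
    mul_right_cancel₀ hz (by rw [one_mul]; exact h)
  rw [Complex.exp_eq_one_iff] at h1
  obtain ⟨n, hn⟩ := h1
  rcases hs with rfl | rfl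
  · refine ⟨n, ?_⟩
    have : ((t : ℂ)) * I = ((2 * Real.pi * n : ℝ) : ℂ) * I := by
      push_cast
      push_cast at hn
      linear_combination hn
    have := mul_right_cancel₀ Complex.I_ne_zero this
    exact_mod_cast this
  · refine ⟨-n, ?_⟩
    have : ((t : ℂ)) * I = ((2 * Real.pi * (-n : ℤ) : ℝ) : ℂ) * I := by
      push_cast
      push_cast at hn
      linear_combination -hn
    have := mul_right_cancel₀ Complex.I_ne_zero this
    exact_mod_cast this

/-- Every fiber of the Harvey–Lawson map away from the origin of the base admits a
fixed-point-free circle action `(t,z) ↦ (e^{ik₁t}z₁, e^{ik₂t}z₂, e^{ik₃t}z₃)` with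
`k₁ + k₂ + k₃ = 0` and the `kⱼ` not all zero. -/
theorem harveyLawson_fiber_free_circle_action
    (p : Fin 3 → ℝ) (hp : p ≠ ![0, 0, 0]) :
    ∃ k : Fin 3 → ℤ, k ≠ 0 ∧ k 0 + k 1 + k 2 = 0 ∧
      (∀ z ∈ HarveyLawson ⁻¹' {p}, ∀ t : ℝ,
        (fun j => Complex.exp ((k j : ℂ) * (t : ℂ) * Complex.I) * z j) ∈
          HarveyLawson ⁻¹' {p}) ∧
      (∀ z ∈ HarveyLawson ⁻¹' {p}, ∀ t : ℝ,
        (fun j => Complex.exp ((k j : ℂ) * (t : ℂ) * Complex.I) * z j) = z →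
          ∃ m : ℤ, t = 2 * Real.pi * m) := by
  by_cases h01 : p 0 ≠ 0 ∨ p 1 ≠ 0
  · refine ⟨![1, -1, 0], ?_, by decide, ?_, ?_⟩
    · intro h; have := congrFun h 0; simp at this
    · intro z hz t
      have hz' : HarveyLawson z = p := hz
      have := hl_invariant ![1, -1, 0] (by decide) z t
      simp only [Set.mem_preimage, Set.mem_singleton_iff]
      rw [this, hz']
    · intro z hz t hfix
      have hz' : HarveyLawson z = p := hz
      have h01' : z 0 ≠ 0 ∨ z 1 ≠ 0 := by
        rcases h01 with h | h
        · left
          have e0 : (z 0 * z 1 * z 2).im = p 0 := by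
            have := congrFun hz' 0; simpa [HarveyLawson] using this
          intro h0; rw [h0] at e0; simp at e0; exact h e0.symm
        · have e1 : ‖z 0‖ ^ 2 - ‖z 1‖ ^ 2 = p 1 := by
            have := congrFun hz' 1; simpa [HarveyLawson] using this
          by_contra hc
          push_neg at hc
          rw [hc.1, hc.2] at e1
          simp at e1
          exact h e1.symm
      rcases h01' with h0 | h1
      · have := congrFun hfix 0
        exact hl_free_aux t (z 0) h0 1 (Or.inl rfl) (by simpa using this)
      · have := congrFun hfix 1
        exact hl_free_aux t (z 1) h1 (-1) (Or.inr rfl) (by simpa using this)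
  · push_neg at h01
    have h2 : p 2 ≠ 0 := by
      intro h2
      apply hp
      funext i; fin_cases i <;> simp [h01.1, h01.2, h2]
    refine ⟨![1, 0, -1], ?_, by decide, ?_, ?_⟩
    · intro h; have := congrFun h 0; simp at this
    · intro z hz t
      have hz' : HarveyLawson z = p := hz
      have := hl_invariant ![1, 0, -1] (by decide) z t
      simp only [Set.mem_preimage, Set.mem_singleton_iff]
      rw [this, hz']
    · intro z hz t hfix
      have hz' : HarveyLawson z = p := hz
      have h02 : z 0 ≠ 0 ∨ z 2 ≠ 0 := by
        have e2 : ‖z 0‖ ^ 2 - ‖z 2‖ ^ 2 = p 2 := by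
          have := congrFun hz' 2; simpa [HarveyLawson] using this
        by_contra hc
        push_neg at hc
        rw [hc.1, hc.2] at e2
        simp at e2
        exact h2 e2.symm
      rcases h02 with h0 | hh2
      · have := congrFun hfix 0
        exact hl_free_aux t (z 0) h0 1 (Or.inl rfl) (by simpa using this)
      · have := congrFun hfix 2
        exact hl_free_aux t (z 2) hh2 (-1) (Or.inr rfl) (by simpa using this)
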